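/- Let e be a function on pairs of space-time points (x,s;y,t) with s < t, satisfying the reverse triangle inequality, e ≥ d where d(x,s;y,t) = -(y-x)²/(t-s), and Θ(e) ≤ m where Θ(e) is the supremum over finite collections of points u_i = (x_i,s_i;y_i,t_i) with disjoint time intervals (s_i,t_i) of ∑_i [e(u_i)-d(u_i)]₊^{3/2}(t_i-s_i)^{-1/2}. Then for any path γ:[s,t] → ℝ, the e-length and d-length of γ satisfy |γ|_d ≤ |γ|_e ≤ |γ|_d + m^{2/3}(t-s)^{1/3}. -/

import Mathlib

/-- The Dirichlet metric `d(x,s;y,t) = -(y-x)^2/(t-s)`. -/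
noncomputable def dirich (x s y t : ℝ) : ℝ := -(y - x)^2 / (t - s)

/-- `Θ(e,u) = [e(u) - d(u)]₊^{3/2} (t-s)^{-1/2}` for `u = (x,s;y,t)`. -/
noncomputable def Theta (e : ℝ → ℝ → ℝ → ℝ → ℝ) (x s y t : ℝ) : ℝ :=
  (max (e x s y t - dirich x s y t) 0) ^ ((3 : ℝ)/2) / Real.sqrt (t - s)

/-- The length of a path `γ : [a,b] → ℝ` with respect to a directed metric `e`:
the infimum over partitions `a = r_0 < ... < r_k = b` of the sums of `e`-increments. -/
noncomputable def eLen (e : ℝ → ℝ → ℝ → ℝ → ℝ) (a b : ℝ) (γ : ℝ → ℝ) : EReal :=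
  sInf {x : EReal | ∃ (k : ℕ) (r : ℕ → ℝ), 0 < k ∧ r 0 = a ∧ r k = b ∧
    (∀ i < k, r i < r (i + 1)) ∧
    x = ((∑ i ∈ Finset.range k,
      e (γ (r i)) (r i) (γ (r (i + 1))) (r (i + 1)) : ℝ) : EReal)}

/-- Strict monotonicity of partition points. -/
lemma partition_mono {k : ℕ} {r : ℕ → ℝ} (hr : ∀ i < k, r i < r (i + 1)) :
    ∀ i j, i < j → j ≤ k → r i < r j := by
  intro i j hij hjk
  induction j with
  | zero => omega
  | succ j ih =>
    rcases Nat.lt_or_ge i j with h | h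
    · exact (ih h (by omega)).trans (hr j (by omega))
    · have : i = j := by omega
      subst this
      exact hr i (by omega)

lemma partition_mono' {k : ℕ} {r : ℕ → ℝ} (hr : ∀ i < k, r i < r (i + 1)) :
    ∀ i j, i ≤ j → j ≤ k → r i ≤ r j := by
  intro i j hij hjk
  rcases eq_or_lt_of_le hij with h | h
  · subst h; rfl
  · exact (partition_mono hr i j h hjk).le

/-- Hölder-type inequality: `∑ a_i ≤ (∑ a_i^{3/2}/√b_i)^{2/3} (∑ b_i)^{1/3}`. -/
lemma holder_aux (k : ℕ) (a b : ℕ → ℝ) (ha : ∀ i ∈ Finset.range k, 0 ≤ a i)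
    (hb : ∀ i ∈ Finset.range k, 0 < b i) :
    ∑ i ∈ Finset.range k, a i ≤
      (∑ i ∈ Finset.range k, a i ^ ((3:ℝ)/2) / Real.sqrt (b i)) ^ ((2:ℝ)/3) *
        (∑ i ∈ Finset.range k, b i) ^ ((1:ℝ)/3) := by
  have hpq : Real.HolderConjugate ((3:ℝ)/2) 3 := ⟨by norm_num, by norm_num, by norm_num⟩
  have H := Real.inner_le_Lp_mul_Lq_of_nonneg (s := Finset.range k)
      (f := fun i => a i / (b i) ^ ((1:ℝ)/3)) (g := fun i => (b i) ^ ((1:ℝ)/3)) hpq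
      (fun i hi => div_nonneg (ha i hi) (Real.rpow_nonneg (hb i hi).le _))
      (fun i hi => Real.rpow_nonneg (hb i hi).le _)
  have e1 : ∀ i ∈ Finset.range k,
      a i / (b i) ^ ((1:ℝ)/3) * (b i) ^ ((1:ℝ)/3) = a i := by
    intro i hi
    exact div_mul_cancel₀ _ (ne_of_gt (Real.rpow_pos_of_pos (hb i hi) _))
  have e2 : ∀ i ∈ Finset.range k,
      (a i / (b i) ^ ((1:ℝ)/3)) ^ ((3:ℝ)/2) = a i ^ ((3:ℝ)/2) / Real.sqrt (b i) := by
    intro i hi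
    rw [Real.div_rpow (ha i hi) (Real.rpow_nonneg (hb i hi).le _),
      ← Real.rpow_mul (hb i hi).le, Real.sqrt_eq_rpow]
    norm_num
  have e3 : ∀ i ∈ Finset.range k, ((b i) ^ ((1:ℝ)/3)) ^ (3:ℝ) = b i := by
    intro i hi
    rw [← Real.rpow_mul (hb i hi).le]
    norm_num
  rw [Finset.sum_congr rfl e1, Finset.sum_congr rfl e2, Finset.sum_congr rfl e3] at H
  convert H using 2
  norm_num

lemma ioo_disjoint {k : ℕ} {r : ℕ → ℝ} (hr : ∀ i < k, r i < r (i + 1)) :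
    ∀ i j : Fin k, (i : ℕ) ≠ (j : ℕ) →
      Set.Ioo (r i) (r (i + 1)) ∩ Set.Ioo (r j) (r (j + 1)) = ∅ := by
  have key : ∀ i j : Fin k, (i : ℕ) < (j : ℕ) →
      Set.Ioo (r i) (r (i + 1)) ∩ Set.Ioo (r j) (r (j + 1)) = ∅ := by
    intro i j hij
    have hle : r ((i : ℕ) + 1) ≤ r j :=
      partition_mono' hr _ _ (by omega) (le_of_lt j.2)
    apply Set.eq_empty_iff_forall_notMem.2
    rintro z ⟨⟨h1, h2⟩, ⟨h3, h4⟩⟩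
    linarith
  intro i j hij
  rcases Nat.lt_or_ge (i : ℕ) (j : ℕ) with h | h
  · exact key i j h
  · rw [Set.inter_comm]
    exact key j i (by omega)

theorem dirichlet_close_path_lengths
    (e : ℝ → ℝ → ℝ → ℝ → ℝ) (m : ℝ) (hm : 0 < m)
    (htri : ∀ x s y r z t : ℝ, s < r → r < t →
      e x s y r + e y r z t ≤ e x s z t)
    (hdom : ∀ x s y t : ℝ, s < t → dirich x s y t ≤ e x s y t)
    (hTheta : ∀ (k : ℕ) (x s y t : Fin k → ℝ), (∀ i, s i < t i) →
      (∀ i j, i ≠ j → Set.Ioo (s i) (t i) ∩ Set.Ioo (s j) (t j) = ∅) →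
      (∑ i, Theta e (x i) (s i) (y i) (t i)) ≤ m)
    (s t : ℝ) (hst : s < t) (γ : ℝ → ℝ) :
    eLen dirich s t γ ≤ eLen e s t γ ∧
    eLen e s t γ ≤ eLen dirich s t γ +
      ((m ^ ((2:ℝ)/3) * (t - s) ^ ((1:ℝ)/3) : ℝ) : EReal) := by
  set C : ℝ := m ^ ((2:ℝ)/3) * (t - s) ^ ((1:ℝ)/3) with hC
  constructor
  · apply le_sInf
    rintro x ⟨k, r, hk, h0, hk', hr, rfl⟩
    refine le_trans (sInf_le ⟨k, r, hk, h0, hk', hr, rfl⟩) ?_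
    apply EReal.coe_le_coe_iff.2
    apply Finset.sum_le_sum
    intro i hi
    exact hdom _ _ _ _ (hr i (Finset.mem_range.1 hi))
  · rw [← EReal.sub_le_iff_le_add (Or.inl (EReal.coe_ne_bot C))
      (Or.inl (EReal.coe_ne_top C))]
    apply le_sInf
    rintro x ⟨k, r, hk, h0, hk', hr, rfl⟩
    rw [EReal.sub_le_iff_le_add (Or.inl (EReal.coe_ne_bot C))
      (Or.inl (EReal.coe_ne_top C))]
    refine le_trans (sInf_le ⟨k, r, hk, h0, hk', hr, rfl⟩) ?_
    rw [← EReal.coe_add]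
    apply EReal.coe_le_coe_iff.2
    -- now a real inequality
    set a : ℕ → ℝ := fun i =>
      max (e (γ (r i)) (r i) (γ (r (i + 1))) (r (i + 1)) -
        dirich (γ (r i)) (r i) (γ (r (i + 1))) (r (i + 1))) 0 with ha
    set b : ℕ → ℝ := fun i => r (i + 1) - r i with hb
    have hbpos : ∀ i ∈ Finset.range k, 0 < b i := fun i hi =>
      sub_pos.2 (hr i (Finset.mem_range.1 hi))
    have hanneg : ∀ i ∈ Finset.range k, 0 ≤ a i := fun i _ => le_max_right _ _
    have hsumb : ∑ i ∈ Finset.range k, b i = t - s := by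
      rw [hb, Finset.sum_range_sub r, h0, hk']
    have hThetaEq : ∑ i ∈ Finset.range k, a i ^ ((3:ℝ)/2) / Real.sqrt (b i) =
        ∑ i ∈ Finset.range k,
          Theta e (γ (r i)) (r i) (γ (r (i + 1))) (r (i + 1)) := rfl
    have hTnn : (0:ℝ) ≤ ∑ i ∈ Finset.range k,
        Theta e (γ (r i)) (r i) (γ (r (i + 1))) (r (i + 1)) := by
      apply Finset.sum_nonneg
      intro i _
      exact div_nonneg (Real.rpow_nonneg (le_max_right _ _) _) (Real.sqrt_nonneg _)
    have hTm : ∑ i ∈ Finset.range k,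
        Theta e (γ (r i)) (r i) (γ (r (i + 1))) (r (i + 1)) ≤ m := by
      rw [Finset.sum_range]
      exact hTheta k (fun i => γ (r i)) (fun i => r i)
        (fun i => γ (r ((i : ℕ) + 1))) (fun i => r ((i : ℕ) + 1))
        (fun i => hr i i.2) (fun i j hij => ioo_disjoint hr i j
          (fun h => hij (Fin.ext h)))
    have hsum_a : ∑ i ∈ Finset.range k, a i ≤ C := by
      refine le_trans (holder_aux k a b hanneg hbpos) ?_
      rw [hThetaEq, hsumb]
      apply mul_le_mul_of_nonneg_right
      · exact Real.rpow_le_rpow hTnn hTm (by norm_num)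
      · exact Real.rpow_nonneg (by linarith) _
    calc ∑ i ∈ Finset.range k, e (γ (r i)) (r i) (γ (r (i + 1))) (r (i + 1))
        ≤ ∑ i ∈ Finset.range k,
            (dirich (γ (r i)) (r i) (γ (r (i + 1))) (r (i + 1)) + a i) := by
          apply Finset.sum_le_sum
          intro i _
          have := le_max_left (e (γ (r i)) (r i) (γ (r (i + 1))) (r (i + 1)) -
            dirich (γ (r i)) (r i) (γ (r (i + 1))) (r (i + 1))) 0
          simp only [ha]
          linarith
      _ = (∑ i ∈ Finset.range k,
            dirich (γ (r i)) (r i) (γ (r (i + 1))) (r (i + 1))) +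
            ∑ i ∈ Finset.range k, a i := Finset.sum_add_distrib
      _ ≤ _ + C := by linarith [hsum_a]
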